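/- Let m and ν be positive integers with 2^{ν-1} ≤ m < 2^ν. Then for all k ≥ 0, C(m+k+2^ν, m) ≡ C(m+k, m) (mod 2); that is, the sequence of binomial coefficients C(m+k, m) modulo 2 is periodic in k with period 2^ν. -/

import Mathlib

theorem stmt_3 (m ν : ℕ) (hm : 0 < m) (hν : 0 < ν)
    (h1 : 2 ^ (ν - 1) ≤ m) (h2 : m < 2 ^ ν) (k : ℕ) :
    (m + k + 2 ^ ν).choose m ≡ (m + k).choose m [MOD 2] := by
  haveI : Fact (Nat.Prime 2) := ⟨Nat.prime_two⟩
  have A := Choose.choose_modEq_choose_mul_prod_range_choose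
    (n := m + k + 2 ^ ν) (k := m) (p := 2) ν
  have B := Choose.choose_modEq_choose_mul_prod_range_choose
    (n := m + k) (k := m) (p := 2) ν
  have hm0 : m / 2 ^ ν = 0 := Nat.div_eq_of_lt h2
  have hdig : ∀ i ∈ Finset.range ν,
      Nat.choose ((m + k + 2 ^ ν) / 2 ^ i % 2) (m / 2 ^ i % 2)
        = Nat.choose ((m + k) / 2 ^ i % 2) (m / 2 ^ i % 2) := by
    intro i hi
    rw [Finset.mem_range] at hi
    have hpow : 2 ^ ν = 2 ^ i * 2 ^ (ν - i) := by
      rw [← pow_add]; congr 1; omega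
    have hdvd : 2 ∣ 2 ^ (ν - i) := dvd_pow_self 2 (by omega)
    obtain ⟨c, hc⟩ := hdvd
    rw [hpow, Nat.add_mul_div_left _ _ (show 0 < 2 ^ i by positivity), hc]
    rw [Nat.add_mul_mod_self_left]
  have hprod : (∏ i ∈ Finset.range ν,
      Nat.choose ((m + k + 2 ^ ν) / 2 ^ i % 2) (m / 2 ^ i % 2))
      = ∏ i ∈ Finset.range ν, Nat.choose ((m + k) / 2 ^ i % 2) (m / 2 ^ i % 2) :=
    Finset.prod_congr rfl hdig
  rw [hm0] at A B
  simp only [Nat.choose_zero_right, one_mul] at A B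
  rw [hprod] at A
  have : ((m + k + 2 ^ ν).choose m : ℤ) ≡ ((m + k).choose m : ℤ) [ZMOD 2] := A.trans B.symm
  rw [← Int.natCast_modEq_iff]
  exact_mod_cast this
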